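/- None of the derivations D₁, D₂, D₃ of the twisted Schrödinger–Virasoro Lie algebra SV (defined by D₁(L_m)=M_m, D₂(L_m)=m M_m, D₃(Y_m)=Y_m, D₃(M_m)=2M_m, zero on other basis vectors) is an inner derivation: for each i ∈ {1,2,3} there is no x ∈ SV with D_i = ad x. -/

import Mathlib

lemma aux_coord_zero {V : Type} [LieRing V] [LieAlgebra ℂ V]
    (b : Module.Basis (Fin 3 × ℤ) ℂ V) (p : Fin 3 × ℤ) (z : V)
    (h : ∀ j, b.coord p ⁅z, b j⁆ = 0) : ∀ y : V, b.coord p ⁅y, z⁆ = 0 := by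
  have h0 : (b.coord p).comp ((LieAlgebra.ad ℂ V z) : V →ₗ[ℂ] V) = 0 := by
    apply b.ext
    intro j
    simpa [LieAlgebra.ad_apply] using h j
  intro y
  have h2 := LinearMap.congr_fun h0 y
  simp only [LinearMap.comp_apply, LieHom.coe_toLinearMap, LieAlgebra.ad_apply,
    LinearMap.zero_apply] at h2
  rw [← lie_skew y z, map_neg, h2, neg_zero]

theorem stmt13
    (V : Type) [LieRing V] [LieAlgebra ℂ V]
    (L Y M : ℤ → V)
    (b : Module.Basis (Fin 3 × ℤ) ℂ V)
    (hbL : ∀ i : ℤ, b ((0 : Fin 3), i) = L i)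
    (hbY : ∀ i : ℤ, b ((1 : Fin 3), i) = Y i)
    (hbM : ∀ i : ℤ, b ((2 : Fin 3), i) = M i)
    (hLL : ∀ m n : ℤ, ⁅L m, L n⁆ = ((m : ℂ) - n) • L (m + n))
    (hLY : ∀ m n : ℤ, ⁅L m, Y n⁆ = ((m : ℂ) / 2 - n) • Y (m + n))
    (hLM : ∀ m n : ℤ, ⁅L m, M n⁆ = (-(n : ℂ)) • M (m + n))
    (hYY : ∀ m n : ℤ, ⁅Y m, Y n⁆ = ((m : ℂ) - n) • M (m + n))
    (hYM : ∀ m n : ℤ, ⁅Y m, M n⁆ = 0)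
    (hMM : ∀ m n : ℤ, ⁅M m, M n⁆ = 0)
    (D₁ D₂ D₃ : V →ₗ[ℂ] V)
    (hD1L : ∀ m : ℤ, D₁ (L m) = M m) (hD1Y : ∀ m : ℤ, D₁ (Y m) = 0)
    (hD1M : ∀ m : ℤ, D₁ (M m) = 0)
    (hD2L : ∀ m : ℤ, D₂ (L m) = (m : ℂ) • M m) (hD2Y : ∀ m : ℤ, D₂ (Y m) = 0)
    (hD2M : ∀ m : ℤ, D₂ (M m) = 0)
    (hD3L : ∀ m : ℤ, D₃ (L m) = 0) (hD3Y : ∀ m : ℤ, D₃ (Y m) = Y m)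
    (hD3M : ∀ m : ℤ, D₃ (M m) = (2 : ℂ) • M m) :
    (¬ ∃ x : V, ∀ y : V, D₁ y = ⁅x, y⁆) ∧
    (¬ ∃ x : V, ∀ y : V, D₂ y = ⁅x, y⁆) ∧
    (¬ ∃ x : V, ∀ y : V, D₃ y = ⁅x, y⁆) := by
  have coordL : ∀ p i, b.coord p (L i) = if ((0:Fin 3), i) = p then 1 else 0 := by
    intro p i; rw [← hbL i, Module.Basis.coord_apply, b.repr_self, Finsupp.single_apply]
  have coordY : ∀ p i, b.coord p (Y i) = if ((1:Fin 3), i) = p then 1 else 0 := by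
    intro p i; rw [← hbY i, Module.Basis.coord_apply, b.repr_self, Finsupp.single_apply]
  have coordM : ∀ p i, b.coord p (M i) = if ((2:Fin 3), i) = p then 1 else 0 := by
    intro p i; rw [← hbM i, Module.Basis.coord_apply, b.repr_self, Finsupp.single_apply]
  refine ⟨?_, ?_, ?_⟩
  · rintro ⟨x, hx⟩
    have key : ∀ y : V, b.coord ((2:Fin 3), 0) ⁅y, L 0⁆ = 0 := by
      apply aux_coord_zero
      rintro ⟨f, i⟩
      fin_cases f <;> (beta_reduce; simp only [Fin.zero_eta, Fin.mk_one, Fin.reduceFinMk])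
      · rw [hbL i, hLL 0 i, map_smul, coordL]
        simp
      · rw [hbY i, hLY 0 i, map_smul, coordY]
        simp
      · rw [hbM i, hLM 0 i, map_smul, coordM]
        rcases eq_or_ne i 0 with h | h <;> simp [h]
    have h1 := key x
    rw [← hx (L 0), hD1L, coordM] at h1
    simp at h1
  · rintro ⟨x, hx⟩
    have key : ∀ y : V, b.coord ((2:Fin 3), 1) ⁅y, L 1⁆ = 0 := by
      apply aux_coord_zero
      rintro ⟨f, i⟩
      fin_cases f <;> (beta_reduce; simp only [Fin.zero_eta, Fin.mk_one, Fin.reduceFinMk])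
      · rw [hbL i, hLL 1 i, map_smul, coordL]
        simp
      · rw [hbY i, hLY 1 i, map_smul, coordY]
        simp
      · rw [hbM i, hLM 1 i, map_smul, coordM]
        rcases eq_or_ne i 0 with h | h <;> simp [h]
    have h1 := key x
    rw [← hx (L 1), hD2L, map_smul, coordM] at h1
    simp at h1
  · rintro ⟨x, hx⟩
    have key : ∀ y : V, b.coord ((1:Fin 3), 0) ⁅y, Y 0⁆ = 0 := by
      apply aux_coord_zero
      rintro ⟨f, i⟩
      fin_cases f <;> (beta_reduce; simp only [Fin.zero_eta, Fin.mk_one, Fin.reduceFinMk])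
      · rw [hbL i, ← lie_skew (Y 0) (L i), hLY i 0, map_neg, map_smul, coordY]
        rcases eq_or_ne i 0 with h | h <;> simp [h]
      · rw [hbY i, hYY 0 i, map_smul, coordM]
        simp
      · rw [hbM i, hYM 0 i]
        simp
    have h1 := key x
    rw [← hx (Y 0), hD3Y, coordY] at h1
    simp at h1
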